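/- Fix real numbers M and a with 0 < |a| < M, set Δ(r) = r² − 2Mr + a², r₊ = M + √(M² − a²), r₋ = M − √(M² − a²), μ(r) = Δ(r)/(r² + a²), and let ρ : ℝ → (r₋, r₊) be the inverse of the map r ↦ 2∫_M^r (s² + a²)/Δ(s) ds. Let r_b ∈ (r₋, r₊). Then there exists a constant C > 0, depending only on M, a and r_b, such that for every u ∈ ℝ and every ū ≥ 1 with ρ(u + ū) ≤ r_b: 0 ≤ ∫_{ū}^{∞} (1/(r₋² + a²) − 1/(ρ(u + t)² + a²)) · t^{−4} dt ≤ C·(ρ(u + ū) − r₋)·ū^{−4}. -/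

import Mathlib

open MeasureTheory

noncomputable def KerrDelta (M a r : ℝ) : ℝ := r ^ 2 - 2 * M * r + a ^ 2

noncomputable def rPlus (M a : ℝ) : ℝ := M + Real.sqrt (M ^ 2 - a ^ 2)

noncomputable def rMinus (M a : ℝ) : ℝ := M - Real.sqrt (M ^ 2 - a ^ 2)

noncomputable def kerrMu (M a r : ℝ) : ℝ := KerrDelta M a r / (r ^ 2 + a ^ 2)

/-- The tortoise coordinate `r*`, normalized by `r*(M) = 0`. -/
noncomputable def rStar (M a r : ℝ) : ℝ := ∫ s in M..r, (s ^ 2 + a ^ 2) / KerrDelta M a s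

section
variable {M a : ℝ} (ha : 0 < |a|) (haM : |a| < M)
include ha haM

lemma hM_pos : 0 < M := lt_of_le_of_lt (abs_nonneg a) haM

lemma sq_sub_pos : 0 < M ^ 2 - a ^ 2 := by
  have h1 : |a| ^ 2 = a ^ 2 := sq_abs a
  nlinarith [abs_nonneg a]

lemma sqrt_sq' : Real.sqrt (M ^ 2 - a ^ 2) ^ 2 = M ^ 2 - a ^ 2 :=
  Real.sq_sqrt (sq_sub_pos ha haM).le

lemma sqrt_pos' : 0 < Real.sqrt (M ^ 2 - a ^ 2) := Real.sqrt_pos.mpr (sq_sub_pos ha haM)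

lemma sqrt_lt_M : Real.sqrt (M ^ 2 - a ^ 2) < M := by
  rw [show M ^ 2 - a ^ 2 = M^2 - a^2 from rfl] at *
  have := (Real.sqrt_lt' (hM_pos ha haM)).mpr (by nlinarith [sq_abs a] : M ^ 2 - a ^ 2 < M ^ 2)
  exact this

lemma rMinus_pos : 0 < rMinus M a := by
  have := sqrt_lt_M ha haM; unfold rMinus; linarith

lemma rMinus_lt_M : rMinus M a < M := by
  have := sqrt_pos' ha haM; unfold rMinus; linarith

lemma M_lt_rPlus : M < rPlus M a := by
  have := sqrt_pos' ha haM; unfold rPlus; linarith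

lemma delta_factor (r : ℝ) : KerrDelta M a r = (r - rMinus M a) * (r - rPlus M a) := by
  unfold KerrDelta rMinus rPlus
  linear_combination sqrt_sq' ha haM

lemma delta_neg {r : ℝ} (hr : r ∈ Set.Ioo (rMinus M a) (rPlus M a)) : KerrDelta M a r < 0 := by
  rw [delta_factor ha haM]
  exact mul_neg_of_pos_of_neg (by linarith [hr.1]) (by linarith [hr.2])

end

section
variable {M a : ℝ} (ha : 0 < |a|) (haM : |a| < M)
include ha haM

lemma g_contOn : ContinuousOn (fun s => (s ^ 2 + a ^ 2) / KerrDelta M a s)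
    (Set.Ioo (rMinus M a) (rPlus M a)) := by
  apply ContinuousOn.div
  · fun_prop
  · unfold KerrDelta; fun_prop
  · exact fun x hx => (delta_neg ha haM hx).ne

lemma intervalIntegrable_g {r₁ r₂ : ℝ} (h1 : r₁ ∈ Set.Ioo (rMinus M a) (rPlus M a))
    (h2 : r₂ ∈ Set.Ioo (rMinus M a) (rPlus M a)) :
    IntervalIntegrable (fun s => (s ^ 2 + a ^ 2) / KerrDelta M a s) volume r₁ r₂ := by
  apply ContinuousOn.intervalIntegrable
  apply (g_contOn ha haM).mono
  exact Set.Icc_subset_Ioo (lt_inf_iff.mpr ⟨h1.1, h2.1⟩) (sup_lt_iff.mpr ⟨h1.2, h2.2⟩)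

lemma M_mem_Ioo : M ∈ Set.Ioo (rMinus M a) (rPlus M a) :=
  ⟨rMinus_lt_M ha haM, M_lt_rPlus ha haM⟩

lemma rStar_sub {r₁ r₂ : ℝ} (h1 : r₁ ∈ Set.Ioo (rMinus M a) (rPlus M a))
    (h2 : r₂ ∈ Set.Ioo (rMinus M a) (rPlus M a)) :
    rStar M a r₂ - rStar M a r₁ = ∫ s in r₁..r₂, (s ^ 2 + a ^ 2) / KerrDelta M a s :=
  intervalIntegral.integral_interval_sub_left
    (intervalIntegrable_g ha haM (M_mem_Ioo ha haM) h2)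
    (intervalIntegrable_g ha haM (M_mem_Ioo ha haM) h1)

lemma g_nonpos {s : ℝ} (hs : s ∈ Set.Ioo (rMinus M a) (rPlus M a)) :
    (s ^ 2 + a ^ 2) / KerrDelta M a s ≤ 0 := by
  apply div_nonpos_of_nonneg_of_nonpos (by positivity) (delta_neg ha haM hs).le

lemma rho_mono (ρ : ℝ → ℝ) (hρmem : ∀ x : ℝ, ρ x ∈ Set.Ioo (rMinus M a) (rPlus M a))
    (hρinv : ∀ x : ℝ, 2 * rStar M a (ρ x) = x) {x y : ℝ} (hxy : x ≤ y) : ρ y ≤ ρ x := by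
  by_contra h
  push_neg at h
  have hsub := rStar_sub ha haM (hρmem x) (hρmem y)
  have hint : (∫ s in (ρ x)..(ρ y), (s ^ 2 + a ^ 2) / KerrDelta M a s) ≤ 0 := by
    calc (∫ s in (ρ x)..(ρ y), (s ^ 2 + a ^ 2) / KerrDelta M a s)
        ≤ ∫ _ in (ρ x)..(ρ y), (0:ℝ) := by
          apply intervalIntegral.integral_mono_on h.le
            (intervalIntegrable_g ha haM (hρmem x) (hρmem y)) intervalIntegrable_const
          intro s hs
          exact g_nonpos ha haM ⟨lt_of_lt_of_le (hρmem x).1 hs.1, lt_of_le_of_lt hs.2 (hρmem y).2⟩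
      _ = 0 := by simp
  have : y - x ≤ 0 := by
    have e : y - x = 2 * rStar M a (ρ y) - 2 * rStar M a (ρ x) := by rw [hρinv, hρinv]
    rw [e]
    nlinarith [hsub]
  have hxe : x = y := le_antisymm hxy (by linarith)
  rw [hxe] at h
  exact lt_irrefl _ h

end

section
variable {M a : ℝ} (ha : 0 < |a|) (haM : |a| < M)
include ha haM

omit ha haM in
lemma div_mul_inv_eq (A b c : ℝ) : A / b * c⁻¹ = A / (c * b) := by
  rw [division_def, division_def, mul_assoc, ← mul_inv, mul_comm b c]

lemma log_gap {rb r₁ r₂ : ℝ} (hrb : rb ∈ Set.Ioo (rMinus M a) (rPlus M a))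
    (h1 : r₁ ∈ Set.Ioo (rMinus M a) (rPlus M a))
    (h2 : r₂ ∈ Set.Ioo (rMinus M a) (rPlus M a)) (h12 : r₁ ≤ r₂) (h2b : r₂ ≤ rb) :
    (∫ s in r₁..r₂, -((s ^ 2 + a ^ 2) / KerrDelta M a s))
      ≤ (rPlus M a ^ 2 + a ^ 2) / (rPlus M a - rb)
        * (Real.log (r₂ - rMinus M a) - Real.log (r₁ - rMinus M a)) := by
  set rm := rMinus M a
  set rp := rPlus M a
  have hrm : 0 < rm := rMinus_pos ha haM
  have h1m : rm < r₁ := h1.1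
  have hbp : rb < rp := hrb.2
  have key : ∀ s ∈ Set.Icc r₁ r₂,
      -((s ^ 2 + a ^ 2) / KerrDelta M a s) ≤ (rp ^ 2 + a ^ 2) / (rp - rb) * (s - rm)⁻¹ := by
    intro s hs
    have hsm : rm < s := lt_of_lt_of_le h1m hs.1
    have hsb : s ≤ rb := le_trans hs.2 h2b
    have hsp : s < rp := lt_of_le_of_lt hsb hbp
    have hΔ : KerrDelta M a s = (s - rm) * (s - rp) := delta_factor ha haM s
    have e : -((s ^ 2 + a ^ 2) / KerrDelta M a s) = (s ^ 2 + a ^ 2) / ((s - rm) * (rp - s)) := by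
      rw [hΔ, show (s - rm) * (s - rp) = -((s - rm) * (rp - s)) by ring, div_neg, neg_neg]
    rw [e, div_mul_inv_eq]
    apply div_le_div₀ (by positivity)
    · nlinarith
    · have h1' : 0 < s - rm := by linarith
      have h2' : 0 < rp - rb := by linarith
      positivity
    · nlinarith
  have hIright : IntervalIntegrable
      (fun s => (rp ^ 2 + a ^ 2) / (rp - rb) * (s - rm)⁻¹) volume r₁ r₂ := by
    apply ContinuousOn.intervalIntegrable
    apply ContinuousOn.mul continuousOn_const
    apply ContinuousOn.inv₀ (by fun_prop)
    intro x hx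
    rw [Set.uIcc_of_le h12] at hx
    have : rm < x := lt_of_lt_of_le h1m hx.1
    linarith
  have hmono := intervalIntegral.integral_mono_on h12
    (intervalIntegrable_g ha haM h1 h2).neg hIright key
  refine le_trans hmono (le_of_eq ?_)
  rw [intervalIntegral.integral_const_mul]
  congr 1
  have := intervalIntegral.integral_comp_sub_right (a := r₁) (b := r₂) (fun x => x⁻¹) rm
  rw [this, integral_inv, Real.log_div (by linarith) (by linarith)]
  rw [Set.uIcc_of_le (by linarith : r₁ - rm ≤ r₂ - rm)]
  intro hmem
  have := hmem.1
  linarith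

lemma rho_decay (ρ : ℝ → ℝ) (hρmem : ∀ x : ℝ, ρ x ∈ Set.Ioo (rMinus M a) (rPlus M a))
    (hρinv : ∀ x : ℝ, 2 * rStar M a (ρ x) = x) {rb : ℝ}
    (hrb : rb ∈ Set.Ioo (rMinus M a) (rPlus M a)) {x₀ x : ℝ} (hx : x₀ ≤ x)
    (hxb : ρ x₀ ≤ rb) :
    ρ x - rMinus M a ≤ (ρ x₀ - rMinus M a)
      * Real.exp (-(x - x₀) / (2 * (rPlus M a ^ 2 + a ^ 2) / (rPlus M a - rb))) := by
  set rm := rMinus M a with hrm_eq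
  set rp := rPlus M a with hrp_eq
  set c := 2 * (rp ^ 2 + a ^ 2) / (rp - rb) with hc_def
  have ha' : a ≠ 0 := by simpa using ha.ne'
  have hrm : 0 < rm := rMinus_pos ha haM
  have hrmrp : rm < rp := lt_trans (rMinus_lt_M ha haM) (M_lt_rPlus ha haM)
  have hbp : rb < rp := hrb.2
  have hc : 0 < c := by apply div_pos (by positivity); linarith
  have hmono : ρ x ≤ ρ x₀ := rho_mono ha haM ρ hρmem hρinv hx
  have h1 := hρmem x
  have h0 := hρmem x₀
  have hgap : x - x₀ ≤ c * (Real.log (ρ x₀ - rm) - Real.log (ρ x - rm)) := by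
    have e : x - x₀ = 2 * rStar M a (ρ x) - 2 * rStar M a (ρ x₀) := by rw [hρinv, hρinv]
    have hsub' := rStar_sub ha haM (hρmem x) (hρmem x₀)
    have hneg : (∫ s in (ρ x)..(ρ x₀), -((s ^ 2 + a ^ 2) / KerrDelta M a s))
        = -(rStar M a (ρ x₀) - rStar M a (ρ x)) := by
      rw [intervalIntegral.integral_neg, hsub']
    have hlog := log_gap ha haM hrb (hρmem x) (hρmem x₀) hmono hxb
    rw [hneg] at hlog
    rw [← hrp_eq, ← hrm_eq] at hlog
    rw [e, hc_def, mul_div_assoc, mul_assoc]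
    linarith [hlog]
  have hpx : 0 < ρ x - rm := by have := (hρmem x).1; linarith
  have hpx0 : 0 < ρ x₀ - rm := by have := (hρmem x₀).1; linarith
  calc ρ x - rm = Real.exp (Real.log (ρ x - rm)) := (Real.exp_log hpx).symm
    _ ≤ Real.exp (Real.log (ρ x₀ - rm) + -(x - x₀) / c) := by
        apply Real.exp_le_exp.mpr
        have h2 : (x - x₀) / c ≤ Real.log (ρ x₀ - rm) - Real.log (ρ x - rm) :=
          (div_le_iff₀ hc).mpr (by nlinarith [hgap])
        rw [neg_div]
        linarith
    _ = (ρ x₀ - rm) * Real.exp (-(x - x₀) / c) := by rw [Real.exp_add, Real.exp_log hpx0]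
end

theorem exp_tail_eq (c ub t : ℝ) (hc : 0 < c) : Real.exp (-(t-ub)/c) = Real.exp (ub/c) * Real.exp (-c⁻¹ * t) := by
  rw [← Real.exp_add]; congr 1; field_simp; ring

theorem exp_tail_integrable (c ub : ℝ) (hc : 0 < c) : IntegrableOn (fun t => Real.exp (-(t-ub)/c)) (Set.Ici ub) := by
  have h0 : IntegrableOn (fun t : ℝ => Real.exp (-c⁻¹ * t)) (Set.Ioi ub) :=
    exp_neg_integrableOn_Ioi ub (by positivity : (0:ℝ) < c⁻¹)
  have h2 : IntegrableOn (fun t : ℝ => Real.exp (ub/c) * Real.exp (-c⁻¹ * t)) (Set.Ici ub) := by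
    rw [integrableOn_Ici_iff_integrableOn_Ioi]
    exact h0.const_mul _
  apply h2.congr_fun _ measurableSet_Ici
  intro t _; exact (exp_tail_eq c ub t hc).symm

theorem exp_tail_integral (c ub : ℝ) (hc : 0 < c) : ∫ t in Set.Ici ub, Real.exp (-(t-ub)/c) = c := by
  rw [MeasureTheory.integral_Ici_eq_integral_Ioi]
  simp_rw [fun t => exp_tail_eq c ub t hc]
  rw [MeasureTheory.integral_const_mul]
  have := integral_comp_mul_left_Ioi (fun x => Real.exp (-x)) ub (by positivity : (0:ℝ) < c⁻¹)
  simp only [neg_mul] at this ⊢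
  rw [this]
  simp only [integral_exp_neg_Ioi, smul_eq_mul, inv_inv]
  rw [← mul_assoc, mul_comm (Real.exp (ub/c)) c, mul_assoc, ← Real.exp_add]
  have : ub / c + -(c⁻¹ * ub) = 0 := by field_simp; ring
  rw [this, Real.exp_zero, mul_one]


set_option maxHeartbeats 1000000 in
/-- Tail-integral estimate converting the asymptotics of `∂_ū ψ` into the asymptotics
of `ψ` at the Cauchy horizon: with `ρ` the inverse of `r ↦ 2r*(r)` and `r_b ∈ (r₋, r₊)`,
there is `C > 0` such that for `ū ≥ 1` with `ρ(u + ū) ≤ r_b` the tail integral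
`∫_ū^∞ (1/(r₋²+a²) − 1/(ρ(u+t)²+a²)) t^{−4} dt` lies in `[0, C (ρ(u+ū) − r₋) ū^{−4}]`. -/
theorem tail_integral_estimate (M a : ℝ) (ha : 0 < |a|) (haM : |a| < M)
    (ρ : ℝ → ℝ) (hρmem : ∀ x : ℝ, ρ x ∈ Set.Ioo (rMinus M a) (rPlus M a))
    (hρinv : ∀ x : ℝ, 2 * rStar M a (ρ x) = x)
    (rb : ℝ) (hrb : rb ∈ Set.Ioo (rMinus M a) (rPlus M a)) :
    ∃ C : ℝ, 0 < C ∧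
      ∀ u ub : ℝ, 1 ≤ ub → ρ (u + ub) ≤ rb →
        0 ≤ (∫ t in Set.Ici ub,
              (1 / (rMinus M a ^ 2 + a ^ 2) - 1 / (ρ (u + t) ^ 2 + a ^ 2))
                * t ^ (-(4:ℝ))) ∧
        (∫ t in Set.Ici ub,
              (1 / (rMinus M a ^ 2 + a ^ 2) - 1 / (ρ (u + t) ^ 2 + a ^ 2))
                * t ^ (-(4:ℝ)))
          ≤ C * (ρ (u + ub) - rMinus M a) * ub ^ (-(4:ℝ)) := by
  have ha' : a ≠ 0 := by simpa using ha.ne'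
  set rm := rMinus M a with hrm_eq
  set rp := rPlus M a with hrp_eq
  have hrm : 0 < rm := rMinus_pos ha haM
  have hrmrp : rm < rp := lt_trans (rMinus_lt_M ha haM) (M_lt_rPlus ha haM)
  have hrp : 0 < rp := lt_trans hrm hrmrp
  have hbp : rb < rp := hrb.2
  set A := rm ^ 2 + a ^ 2 with hA_def
  have hA : 0 < A := by positivity
  set c := 2 * (rp ^ 2 + a ^ 2) / (rp - rb) with hc_def
  have hc : 0 < c := by apply div_pos (by positivity); linarith
  set K := 2 * rp / A ^ 2 with hK_def
  have hK : 0 < K := div_pos (by linarith) (by positivity)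
  refine ⟨K * c, mul_pos hK hc, ?_⟩
  intro u ub hub hρb
  have hub0 : (0:ℝ) < ub := lt_of_lt_of_le one_pos hub
  set r0 := ρ (u + ub) with hr0_def
  have hr00 := hρmem (u + ub)
  set D := K * (r0 - rm) * ub ^ (-(4:ℝ)) with hD_def
  have hDnn : 0 ≤ D := by
    apply mul_nonneg (mul_nonneg hK.le (by linarith [hr00.1]))
    exact (Real.rpow_pos_of_pos hub0 _).le
  -- pointwise nonnegativity
  have hfnn : ∀ t ∈ Set.Ici ub,
      0 ≤ (1 / A - 1 / (ρ (u + t) ^ 2 + a ^ 2)) * t ^ (-(4:ℝ)) := by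
    intro t ht
    have htpos : 0 < t := lt_of_lt_of_le hub0 ht
    have hmem := hρmem (u + t)
    have hB : 0 < ρ (u + t) ^ 2 + a ^ 2 := by positivity
    apply mul_nonneg _ (Real.rpow_nonneg htpos.le _)
    have hAB : A ≤ ρ (u + t) ^ 2 + a ^ 2 := by
      rw [hA_def]; nlinarith [hmem.1]
    have := one_div_le_one_div_of_le hA hAB
    linarith
  -- pointwise upper bound
  have hbound : ∀ t ∈ Set.Ici ub,
      (1 / A - 1 / (ρ (u + t) ^ 2 + a ^ 2)) * t ^ (-(4:ℝ))
        ≤ D * Real.exp (-(t - ub) / c) := by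
    intro t ht
    have htpos : 0 < t := lt_of_lt_of_le hub0 ht
    have hmem := hρmem (u + t)
    have hB : 0 < ρ (u + t) ^ 2 + a ^ 2 := by positivity
    have hAB : A ≤ ρ (u + t) ^ 2 + a ^ 2 := by rw [hA_def]; nlinarith [hmem.1]
    -- decay of ρ
    have hdec := rho_decay ha haM ρ hρmem hρinv hrb
      (by linarith [Set.mem_Ici.mp ht] : u + ub ≤ u + t) hρb
    rw [show u + t - (u + ub) = t - ub by ring] at hdec
    rw [← hrp_eq, ← hrm_eq, ← hr0_def, ← hc_def] at hdec
    -- first factor bound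
    have h1 : 1 / A - 1 / (ρ (u + t) ^ 2 + a ^ 2) ≤ K * (ρ (u + t) - rm) := by
      rw [div_sub_div _ _ hA.ne' hB.ne']
      have e2 : K * (ρ (u + t) - rm) = 2 * rp * (ρ (u + t) - rm) / A ^ 2 := by
        rw [hK_def]; ring
      rw [e2]
      apply div_le_div₀
      · have := hmem.1; nlinarith
      · nlinarith [hmem.1, hmem.2]
      · positivity
      · nlinarith
    have h1' : 1 / A - 1 / (ρ (u + t) ^ 2 + a ^ 2)
        ≤ K * ((r0 - rm) * Real.exp (-(t - ub) / c)) := by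
      refine le_trans h1 ?_
      apply mul_le_mul_of_nonneg_left _ hK.le
      linarith [hdec]
    have h2 : t ^ (-(4:ℝ)) ≤ ub ^ (-(4:ℝ)) := by
      rw [Real.rpow_neg htpos.le, Real.rpow_neg hub0.le]
      apply inv_anti₀ (Real.rpow_pos_of_pos hub0 _)
      exact Real.rpow_le_rpow hub0.le ht (by norm_num)
    calc (1 / A - 1 / (ρ (u + t) ^ 2 + a ^ 2)) * t ^ (-(4:ℝ))
        ≤ K * ((r0 - rm) * Real.exp (-(t - ub) / c)) * ub ^ (-(4:ℝ)) := by
          apply mul_le_mul h1' h2 (Real.rpow_nonneg htpos.le _)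
          apply mul_nonneg hK.le
          apply mul_nonneg (by linarith [hr00.1]) (Real.exp_pos _).le
      _ = D * Real.exp (-(t - ub) / c) := by rw [hD_def]; ring
  -- integrability of the bound
  have h_int : IntegrableOn (fun t => D * Real.exp (-(t - ub) / c)) (Set.Ici ub) :=
    (exp_tail_integrable c ub hc).const_mul D
  -- measurability of integrand
  have hρanti : Antitone ρ := fun x y h => rho_mono ha haM ρ hρmem hρinv h
  have m1 : Measurable fun t : ℝ => ρ (u + t) :=
    hρanti.measurable.comp (measurable_id.const_add u)
  have m2 : Measurable fun t : ℝ =>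
      (1 / A - 1 / (ρ (u + t) ^ 2 + a ^ 2)) * t ^ (-(4:ℝ)) := by
    apply Measurable.mul
    · exact Measurable.sub measurable_const
        (measurable_const.div ((m1.pow_const 2).add_const (a ^ 2)))
    · exact measurable_id.pow_const (-(4:ℝ))
  -- integrability of the integrand
  have f_int : IntegrableOn (fun t =>
      (1 / A - 1 / (ρ (u + t) ^ 2 + a ^ 2)) * t ^ (-(4:ℝ))) (Set.Ici ub) := by
    apply h_int.mono' m2.aestronglyMeasurable
    filter_upwards [ae_restrict_mem measurableSet_Ici] with t ht
    rw [Real.norm_eq_abs, abs_of_nonneg (hfnn t ht)]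
    exact hbound t ht
  constructor
  · exact setIntegral_nonneg measurableSet_Ici hfnn
  · calc (∫ t in Set.Ici ub,
          (1 / A - 1 / (ρ (u + t) ^ 2 + a ^ 2)) * t ^ (-(4:ℝ)))
        ≤ ∫ t in Set.Ici ub, D * Real.exp (-(t - ub) / c) :=
          setIntegral_mono_on f_int h_int measurableSet_Ici hbound
      _ = D * ∫ t in Set.Ici ub, Real.exp (-(t - ub) / c) := by
          rw [MeasureTheory.integral_const_mul]
      _ = D * c := by rw [exp_tail_integral c ub hc]
      _ = K * c * (r0 - rm) * ub ^ (-(4:ℝ)) := by rw [hD_def]; ring
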